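/- For every l_0 ∈ Z^k the following hold. (i) The counting function Q'(l) := Σ c(l̃ + l_0), summed over l̃ ∈ Z^k with l̃ ≥ 0 and l̃ ≱ l, agrees with some quasipolynomial 𝔔' on (l_{**} + 𝒦) ∩ Z^k for some l_{**} ∈ Z^k. (ii) For any such 𝔔' one has 𝔔(l_0) = Σ_{l̃ ∈ Z^k, l̃ ≱ l_0} c(l̃) + 𝔔'(0), i.e., the quasipolynomial of the original series evaluated at l_0 equals the finite evaluation at 1 of the 'non-effective' part of the shifted series plus the periodic constant of its effective part. -/

import Mathlib

open Matrix

open scoped Classical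

noncomputable section

namespace Plumbing

variable {V : Type*} [Fintype V] [DecidableEq V]

/-- The rational matrix associated with the integral intersection matrix. -/
def Aq (A : Matrix V V ℤ) : Matrix V V ℚ := A.map fun n => (n : ℚ)

/-- Negative definiteness of the intersection form. -/
def NegDef (A : Matrix V V ℤ) : Prop :=
  ∀ x : V → ℚ, x ≠ 0 → x ⬝ᵥ (Aq A).mulVec x < 0

/-- The dual base element `E*_v`, the `v`-th column of `−A⁻¹`. -/
def Estar (A : Matrix V V ℤ) (v : V) : V → ℚ := fun w => (-(Aq A)⁻¹) w v

/-- Membership in the dual lattice `L' = {x ∈ ℚ^V : Ax ∈ ℤ^V}`. -/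
def memLp (A : Matrix V V ℤ) (x : V → ℚ) : Prop :=
  ∀ v, ∃ n : ℤ, (Aq A).mulVec x v = (n : ℚ)

/-- `x` and `y` are in the same class of `H = L'/L`, i.e. `x - y ∈ L`. -/
def sameClass {W : Type*} (x y : W → ℚ) : Prop := ∀ w, ∃ n : ℤ, x w - y w = (n : ℚ)

/-- The valency of a vertex. -/
def deg {W : Type*} (G : SimpleGraph W) (w : W) : ℕ := (G.neighborSet w).ncard

/-- The coefficients `c_v(k)`. -/
def ccoef (d k : ℕ) : ℤ :=
  if 2 ≤ d then (-1 : ℤ) ^ k * (Nat.choose (d - 2) k) else (Nat.choose (k + 1 - d) k)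

/-- The coefficient `z(l')` of the multivariable series `Z(t)`. -/
def zcoef (A : Matrix V V ℤ) (δ : V → ℕ) (l' : V → ℚ) : ℤ :=
  ∑ᶠ k : V → ℕ,
    if (∑ v, (k v : ℚ) • Estar A v) = l' then ∏ v, ccoef (δ v) (k v) else 0

/-- The counting function `Q_{[x]}(x)`. -/
def Qcount (A : Matrix V V ℤ) (δ : V → ℕ) (x : V → ℚ) : ℤ :=
  ∑ᶠ l' : V → ℚ,
    if memLp A l' ∧ sameClass l' x ∧ ¬ x ≤ l' then zcoef A δ l' else 0

/-- The counting function `Q_{[x],I}(x)` of the reduced series. -/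
def QcountI (A : Matrix V V ℤ) (δ : V → ℕ) (I : Set V) (x : V → ℚ) : ℤ :=
  ∑ᶠ l' : V → ℚ,
    if memLp A l' ∧ sameClass l' x ∧ ¬ (∀ v ∈ I, x v ≤ l' v) then zcoef A δ l' else 0

/-- The counting function `Q_{0,I}(x)` on the integral lattice. -/
def QcountI0 (A : Matrix V V ℤ) (δ : V → ℕ) (I : Set V) (x : V → ℤ) : ℤ :=
  ∑ᶠ l : V → ℤ,
    if ¬ (∀ v ∈ I, x v ≤ l v) then zcoef A δ (fun v => (l v : ℚ)) else 0

/-- The modified counting function `q_{[x],J}(x)`. -/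
def qmod (A : Matrix V V ℤ) (δ : V → ℕ) (J : Set V) (x : V → ℚ) : ℤ :=
  ∑ᶠ l' : V → ℚ,
    if memLp A l' ∧ sameClass l' x ∧ (∀ v ∈ J, l' v < x v) then zcoef A δ l' else 0

/-- The coefficient function of the reduced series `Z(t_W)`. -/
def zred (A : Matrix V V ℤ) (δ : V → ℕ) (W : Set V) (y : W → ℚ) : ℤ :=
  ∑ᶠ l' : V → ℚ, if (fun w : W => l' w.1) = y then zcoef A δ l' else 0

/-- The intersection matrix of a full subgraph. -/
def subM (A : Matrix V V ℤ) (W : Set V) : Matrix W W ℤ :=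
  A.submatrix Subtype.val Subtype.val

/-- The restriction operator `j*_W : L'(T) → L'(T(W))`. -/
def jstar (A : Matrix V V ℤ) (W : Set V) (l' : V → ℚ) : W → ℚ :=
  (Aq (subM A W))⁻¹.mulVec fun w => (Aq A).mulVec l' w.1

/-- The canonical cycle `K`, the unique solution of `(K + E_v, E_v) = -2`. -/
def Kcan (A : Matrix V V ℤ) : V → ℚ :=
  (Aq A)⁻¹.mulVec fun v => (-2 : ℚ) - (A v v : ℚ)

/-- The Riemann–Roch expression `χ(x) = -(x, x + K)/2`. -/
def chi (A : Matrix V V ℤ) (x : V → ℚ) : ℚ :=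
  -(x ⬝ᵥ (Aq A).mulVec (x + Kcan A)) / 2

/-- The weight `w(l, J)` of the lattice cube `(l, J)`. -/
def wcube (A : Matrix V V ℤ) (l : V → ℤ) (J : Finset V) : ℚ :=
  J.powerset.sup' ⟨∅, Finset.empty_mem_powerset J⟩
    fun J' => chi A fun v => (l v : ℚ) + if v ∈ J' then 1 else 0

/-- Quasipolynomials on `ℤ^W`: polynomial on each coset of a finite index subgroup. -/
def IsQuasiPoly {W : Type*} [Fintype W] (Q : (W → ℤ) → ℚ) : Prop :=
  ∃ Λ : AddSubgroup (W → ℤ), Λ.index ≠ 0 ∧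
    ∀ c : W → ℤ, ∃ p : MvPolynomial W ℚ,
      ∀ l ∈ Λ, Q (c + l) = MvPolynomial.eval (fun w => ((c + l) w : ℚ)) p

/-- The vertex set of the connected component `c` of the complement of `I`. -/
def compSet (G : SimpleGraph V) (I : Set V) (c : (G.induce Iᶜ).ConnectedComponent) :
    Set V :=
  {v : V | ∃ h : v ∈ (Iᶜ : Set V), (G.induce Iᶜ).connectedComponentMk ⟨v, h⟩ = c}

/-- The boundary of a subset `V2` of the vertices. -/
def Bdry (G : SimpleGraph V) (V2 : Set V) : Set V :=
  {u ∈ V2 | ∃ w, w ∉ V2 ∧ G.Adj u w}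

/-- `V_{1,u}` : the vertex `u` together with the vertex sets of all connected
components of the complement of `V2` adjacent to `u`. -/
def V1u (G : SimpleGraph V) (V2 : Set V) (u : V) : Set V :=
  insert u {v : V | ∃ h : v ∈ (V2ᶜ : Set V), ∃ w, ∃ hw : w ∈ (V2ᶜ : Set V),
    G.Adj u w ∧ (G.induce V2ᶜ).connectedComponentMk ⟨v, h⟩ =
      (G.induce V2ᶜ).connectedComponentMk ⟨w, hw⟩}

end Plumbing

open Plumbing


section AuxStatement4

variable {k m : ℕ}

lemma st4_aeval_eq_eval (p : MvPolynomial (Fin k) ℚ) (x : Fin k → ℚ) :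
    MvPolynomial.aeval x p = MvPolynomial.eval x p := by
  rw [MvPolynomial.aeval_def, MvPolynomial.eval, MvPolynomial.coe_eval₂Hom]
  norm_num [Algebra.algebraMap_self]

lemma st4_eval_bind₁ (g : Fin k → MvPolynomial (Fin k) ℚ) (p : MvPolynomial (Fin k) ℚ)
    (x : Fin k → ℚ) :
    MvPolynomial.eval x (MvPolynomial.bind₁ g p)
      = MvPolynomial.eval (fun i => MvPolynomial.eval x (g i)) p := by
  rw [← st4_aeval_eq_eval, MvPolynomial.aeval_bind₁]
  rw [show (fun i => (MvPolynomial.aeval x) (g i)) = fun i => MvPolynomial.eval x (g i) from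
    funext fun i => st4_aeval_eq_eval _ _, st4_aeval_eq_eval]

lemma st4_eval_aeval_poly (g : Fin k → Polynomial ℚ) (p : MvPolynomial (Fin k) ℚ) (x : ℚ) :
    Polynomial.eval x (MvPolynomial.aeval g p)
      = MvPolynomial.eval (fun i => Polynomial.eval x (g i)) p := by
  rw [MvPolynomial.aeval_def]
  have := MvPolynomial.eval₂_comp_left (Polynomial.evalRingHom x)
    (algebraMap ℚ (Polynomial ℚ)) g p
  simp only [Polynomial.coe_evalRingHom] at this
  rw [this]
  rw [MvPolynomial.eval, MvPolynomial.coe_eval₂Hom]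
  congr 1
  ext q
  simp [Polynomial.algebraMap_eq]

lemma st4_cone_add (Vj : Fin m → Fin k → ℝ) (K : Set (Fin k → ℝ))
    (hK : K = {x | ∃ t : Fin m → ℝ, (∀ j, 0 ≤ t j) ∧ x = ∑ j, t j • Vj j}) :
    ∀ x ∈ K, ∀ y ∈ K, x + y ∈ K := by
  subst hK
  rintro x ⟨t, ht, rfl⟩ y ⟨s, hs, rfl⟩
  exact ⟨t + s, fun j => add_nonneg (ht j) (hs j), by
    simp [add_smul, Finset.sum_add_distrib]⟩

lemma st4_cone_smul (Vj : Fin m → Fin k → ℝ) (K : Set (Fin k → ℝ))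
    (hK : K = {x | ∃ t : Fin m → ℝ, (∀ j, 0 ≤ t j) ∧ x = ∑ j, t j • Vj j})
    {r : ℝ} (hr : 0 ≤ r) : ∀ x ∈ K, r • x ∈ K := by
  subst hK
  rintro x ⟨t, ht, rfl⟩
  exact ⟨fun j => r * t j, fun j => mul_nonneg hr (ht j), by
    simp [Finset.smul_sum, smul_smul]⟩

lemma st4_cone_nonneg (Vj : Fin m → Fin k → ℝ) (hVj : ∀ j i, 0 < Vj j i)
    (K : Set (Fin k → ℝ))
    (hK : K = {x | ∃ t : Fin m → ℝ, (∀ j, 0 ≤ t j) ∧ x = ∑ j, t j • Vj j}) :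
    ∀ x ∈ K, ∀ i, 0 ≤ x i := by
  subst hK
  rintro x ⟨t, ht, rfl⟩ i
  simp only [Finset.sum_apply, Pi.smul_apply, smul_eq_mul]
  exact Finset.sum_nonneg fun j _ => mul_nonneg (ht j) (hVj j i).le

lemma st4_finite (Vj : Fin m → Fin k → ℝ) (hVj : ∀ j i, 0 < Vj j i)
    (K : Set (Fin k → ℝ))
    (hK : K = {x | ∃ t : Fin m → ℝ, (∀ j, 0 ≤ t j) ∧ x = ∑ j, t j • Vj j})
    (c : (Fin k → ℤ) → ℤ)
    (hsupp : ∀ l, c l ≠ 0 → (fun i => (l i : ℝ)) ∈ K)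
    (b : Fin k → ℤ) :
    {s : Fin k → ℤ | c s ≠ 0 ∧ ¬ b ≤ s}.Finite := by
  classical
  set B : ℝ := (∑ i, |(b i : ℝ)|) + 1 with hB
  have hB1 : (1:ℝ) ≤ B := by
    have : (0:ℝ) ≤ ∑ i, |(b i : ℝ)| := Finset.sum_nonneg fun i _ => abs_nonneg _
    linarith
  have hbB : ∀ i, (b i : ℝ) ≤ B := by
    intro i
    have h1 : (b i : ℝ) ≤ |(b i : ℝ)| := le_abs_self _
    have h2 : |(b i : ℝ)| ≤ ∑ i', |(b i' : ℝ)| :=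
      Finset.single_le_sum (f := fun i' => |(b i' : ℝ)|) (fun i' _ => abs_nonneg _)
        (Finset.mem_univ i)
    linarith
  set R : Fin k → ℝ := fun i => ∑ j, ∑ i', (B / Vj j i') * Vj j i with hR
  set N : Fin k → ℤ := fun i => ⌈R i⌉ with hN
  apply Set.Finite.subset (Set.finite_Icc (0 : Fin k → ℤ) N)
  rintro s ⟨hcs, hbs⟩
  obtain ⟨t, ht, hts⟩ := by rw [hK] at hsupp; exact hsupp s hcs
  have hsi : ∀ i, (s i : ℝ) = ∑ j, t j * Vj j i := by
    intro i
    have := congrFun hts i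
    simpa [Finset.sum_apply] using this
  rw [Pi.le_def, not_forall] at hbs
  obtain ⟨i₀, hi₀⟩ := hbs
  push_neg at hi₀
  have hsi₀ : (s i₀ : ℝ) ≤ B := by
    have : (s i₀ : ℝ) < (b i₀ : ℝ) := by exact_mod_cast hi₀
    linarith [hbB i₀]
  have htj : ∀ j, t j ≤ B / Vj j i₀ := by
    intro j
    rw [le_div_iff₀ (hVj j i₀)]
    calc t j * Vj j i₀ ≤ ∑ j', t j' * Vj j' i₀ :=
          Finset.single_le_sum (fun j' _ => mul_nonneg (ht j') (hVj j' i₀).le)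
            (Finset.mem_univ j)
      _ = (s i₀ : ℝ) := (hsi i₀).symm
      _ ≤ B := hsi₀
  have hnn : ∀ i, 0 ≤ s i := by
    intro i
    have : (0:ℝ) ≤ (s i : ℝ) := by
      rw [hsi i]
      exact Finset.sum_nonneg fun j _ => mul_nonneg (ht j) (hVj j i).le
    exact_mod_cast this
  have hub : ∀ i, s i ≤ N i := by
    intro i
    have hRi : (s i : ℝ) ≤ R i := by
      rw [hsi i, hR]
      apply Finset.sum_le_sum
      intro j _
      calc t j * Vj j i ≤ (B / Vj j i₀) * Vj j i :=
            mul_le_mul_of_nonneg_right (htj j) (hVj j i).le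
        _ ≤ ∑ i', (B / Vj j i') * Vj j i := by
            apply Finset.single_le_sum (f := fun i' => (B / Vj j i') * Vj j i)
              (fun i' _ => mul_nonneg (div_nonneg (by linarith) (hVj j i').le) (hVj j i).le)
              (Finset.mem_univ i₀)
    have : (s i : ℝ) ≤ (⌈R i⌉ : ℝ) := le_trans hRi (Int.le_ceil _)
    exact_mod_cast this
  exact ⟨hnn, hub⟩

lemma st4_deep (Vj : Fin m → Fin k → ℝ) (K : Set (Fin k → ℝ))
    (hK : K = {x | ∃ t : Fin m → ℝ, (∀ j, 0 ≤ t j) ∧ x = ∑ j, t j • Vj j})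
    (hKint : (interior K).Nonempty) (r : ℝ) (hr : 0 ≤ r) :
    ∃ w : Fin k → ℤ, ∀ v : Fin k → ℝ, (∀ i, |v i| ≤ r) →
      (fun i => (w i : ℝ) + v i) ∈ K := by
  obtain ⟨x₀, hx₀⟩ := hKint
  obtain ⟨ε, hε, hball⟩ := Metric.mem_nhds_iff.mp (mem_interior_iff_mem_nhds.mp hx₀)
  obtain ⟨n, hn⟩ := exists_nat_gt ((r + 2) / ε)
  have hn0 : (0:ℝ) < n := lt_trans (div_pos (by linarith) hε) hn
  have hnε : r + 2 < n * ε := by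
    rw [div_lt_iff₀ hε] at hn; linarith
  refine ⟨fun i => ⌊(n:ℝ) * x₀ i⌋, fun v hv => ?_⟩
  set y : Fin k → ℝ := fun i => (⌊(n:ℝ) * x₀ i⌋ : ℝ) + v i with hy
  have hmem : (n:ℝ)⁻¹ • y ∈ K := by
    apply hball
    rw [Metric.mem_ball, dist_pi_lt_iff hε]
    intro i
    rw [Real.dist_eq]
    have h1 : |(⌊(n:ℝ) * x₀ i⌋ : ℝ) - (n:ℝ) * x₀ i| ≤ 1 := by
      rw [abs_le]
      constructor
      · linarith [Int.sub_one_lt_floor ((n:ℝ) * x₀ i)]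
      · linarith [Int.floor_le ((n:ℝ) * x₀ i)]
    have h2 : ((n:ℝ)⁻¹ • y) i - x₀ i = (n:ℝ)⁻¹ * (y i - (n:ℝ) * x₀ i) := by
      rw [Pi.smul_apply, smul_eq_mul, mul_sub, inv_mul_cancel_left₀ (ne_of_gt hn0)]
    rw [h2, abs_mul, abs_inv, abs_of_pos hn0]
    have h3 : |y i - (n:ℝ) * x₀ i| ≤ 1 + r := by
      have : y i - (n:ℝ) * x₀ i = ((⌊(n:ℝ) * x₀ i⌋ : ℝ) - (n:ℝ) * x₀ i) + v i := by
        rw [hy]; ring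
      rw [this]
      calc |((⌊(n:ℝ) * x₀ i⌋ : ℝ) - (n:ℝ) * x₀ i) + v i|
          ≤ |(⌊(n:ℝ) * x₀ i⌋ : ℝ) - (n:ℝ) * x₀ i| + |v i| := abs_add_le _ _
        _ ≤ 1 + r := add_le_add h1 (hv i)
    calc (n:ℝ)⁻¹ * |y i - (n:ℝ) * x₀ i| ≤ (n:ℝ)⁻¹ * (1 + r) := by
          apply mul_le_mul_of_nonneg_left h3 (by positivity)
      _ < ε := by
          rw [inv_mul_lt_iff₀ hn0]; linarith [mul_comm ε (n:ℝ)]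
  have hss : (n:ℝ) • ((n:ℝ)⁻¹ • y) ∈ K := by
    rw [hK] at hmem ⊢
    obtain ⟨t, ht, hts⟩ := hmem
    exact ⟨fun j => (n:ℝ) * t j, fun j => mul_nonneg hn0.le (ht j), by
      rw [hts]; simp [Finset.smul_sum, smul_smul]⟩
  rwa [smul_inv_smul₀ (ne_of_gt hn0)] at hss

lemma st4_shift_sum (c : (Fin k → ℤ) → ℤ) (Q : (Fin k → ℤ) → ℤ)
    (hQ : ∀ l, Q l = ∑ᶠ lt : Fin k → ℤ, if ¬ l ≤ lt then c lt else 0)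
    (hfin : ∀ b : Fin k → ℤ, {s : Fin k → ℤ | c s ≠ 0 ∧ ¬ b ≤ s}.Finite)
    (l₀ l : Fin k → ℤ) (hl : 0 ≤ l) :
    (∑ᶠ lt : Fin k → ℤ, if 0 ≤ lt ∧ ¬ l ≤ lt then c (lt + l₀) else 0)
      = Q (l + l₀) - Q l₀ := by
  classical
  set g : (Fin k → ℤ) → ℤ := fun s => if l₀ ≤ s ∧ ¬ (l + l₀) ≤ s then c s else 0 with hg
  have h1 : (∑ᶠ lt : Fin k → ℤ, if 0 ≤ lt ∧ ¬ l ≤ lt then c (lt + l₀) else 0)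
      = ∑ᶠ s : Fin k → ℤ, g s := by
    have := finsum_comp_equiv (Equiv.addRight l₀) (f := g)
    rw [← this]
    apply finsum_congr
    intro lt
    simp only [hg, Equiv.coe_addRight, le_add_iff_nonneg_left, add_le_add_iff_right]
  rw [h1]
  have hsg : (Function.support g).Finite := by
    apply Set.Finite.subset (hfin (l + l₀))
    intro s hs
    simp only [hg, Function.mem_support, ne_eq, ite_eq_right_iff, not_forall] at hs
    exact ⟨hs.2, hs.1.2⟩
  have hsg2 : (Function.support fun s : Fin k → ℤ =>
      if ¬ l₀ ≤ s then c s else 0).Finite := by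
    apply Set.Finite.subset (hfin l₀)
    intro s hs
    simp only [Function.mem_support, ne_eq, ite_eq_right_iff, not_forall] at hs
    exact ⟨hs.2, hs.1⟩
  have key : (∑ᶠ s : Fin k → ℤ, if ¬ (l + l₀) ≤ s then c s else 0)
      = (∑ᶠ s : Fin k → ℤ, g s)
        + ∑ᶠ s : Fin k → ℤ, if ¬ l₀ ≤ s then c s else 0 := by
    rw [← finsum_add_distrib hsg hsg2]
    apply finsum_congr
    intro s
    by_cases h0 : l₀ ≤ s
    · by_cases h1' : (l + l₀) ≤ s <;> simp [hg, h0, h1']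
    · have hnle : ¬ (l + l₀) ≤ s := fun hc => h0 (le_trans (by simpa using hl) hc)
      simp [hg, h0, hnle]
  rw [hQ (l + l₀), hQ l₀, key]
  ring

lemma st4_quasiShift (𝔔 : (Fin k → ℤ) → ℚ) (h : IsQuasiPoly 𝔔) (l₀ : Fin k → ℤ) (q₀ : ℚ) :
    IsQuasiPoly (fun l => 𝔔 (l + l₀) - q₀) := by
  obtain ⟨Λ, hΛ, hp⟩ := h
  refine ⟨Λ, hΛ, fun c0 => ?_⟩
  obtain ⟨p, hp⟩ := hp (c0 + l₀)
  refine ⟨MvPolynomial.bind₁ (fun i => MvPolynomial.X i + MvPolynomial.C (l₀ i : ℚ)) p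
      - MvPolynomial.C q₀, fun l hl => ?_⟩
  have h1 := hp l hl
  have h2 : c0 + l + l₀ = c0 + l₀ + l := by abel
  simp only [MvPolynomial.eval_sub, MvPolynomial.eval_C, st4_eval_bind₁]
  rw [show (fun i => MvPolynomial.eval (fun w => ((c0 + l) w : ℚ))
        (MvPolynomial.X i + MvPolynomial.C (l₀ i : ℚ)))
      = fun w => ((c0 + l₀ + l) w : ℚ) from funext fun i => by
    simp only [MvPolynomial.eval_add, MvPolynomial.eval_X, MvPolynomial.eval_C, Pi.add_apply]
    push_cast; ring]
  rw [← h1, h2]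

end AuxStatement4

/-- shifting a series supported on a cone: the counting function of the
shifted series admits a quasipolynomial, and the value of the quasipolynomial of the
original series at `l₀` equals the finite part plus the periodic constant of the
effective part of the shifted series. -/
theorem statement4 (k m : ℕ) (hk : 1 ≤ k)
    (Vj : Fin m → Fin k → ℝ) (hVj : ∀ j i, 0 < Vj j i)
    (K : Set (Fin k → ℝ))
    (hK : K = {x | ∃ t : Fin m → ℝ, (∀ j, 0 ≤ t j) ∧ x = ∑ j, t j • Vj j})
    (hKint : (interior K).Nonempty)
    (c : (Fin k → ℤ) → ℤ)
    (hsupp : ∀ l, c l ≠ 0 → (fun i => (l i : ℝ)) ∈ K)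
    (Q : (Fin k → ℤ) → ℤ)
    (hQ : ∀ l, Q l = ∑ᶠ lt : Fin k → ℤ, if ¬ l ≤ lt then c lt else 0)
    (𝔔 : (Fin k → ℤ) → ℚ) (h𝔔 : IsQuasiPoly 𝔔)
    (lstar : Fin k → ℤ)
    (hagree : ∀ l : Fin k → ℤ,
      (fun i => (l i : ℝ) - (lstar i : ℝ)) ∈ K → (Q l : ℚ) = 𝔔 l)
    (l₀ : Fin k → ℤ) :
    (∃ (𝔔' : (Fin k → ℤ) → ℚ) (lss : Fin k → ℤ), IsQuasiPoly 𝔔' ∧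
        ∀ l : Fin k → ℤ, (fun i => (l i : ℝ) - (lss i : ℝ)) ∈ K →
          ((∑ᶠ lt : Fin k → ℤ, if 0 ≤ lt ∧ ¬ l ≤ lt then c (lt + l₀) else 0 : ℤ) : ℚ)
            = 𝔔' l) ∧
    (∀ (𝔔' : (Fin k → ℤ) → ℚ) (lss : Fin k → ℤ), IsQuasiPoly 𝔔' →
        (∀ l : Fin k → ℤ, (fun i => (l i : ℝ) - (lss i : ℝ)) ∈ K →
          ((∑ᶠ lt : Fin k → ℤ, if 0 ≤ lt ∧ ¬ l ≤ lt then c (lt + l₀) else 0 : ℤ) : ℚ)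
            = 𝔔' l) →
        𝔔 l₀ = (Q l₀ : ℚ) + 𝔔' 0) := by
  classical
  have hadd := st4_cone_add Vj K hK
  have hnonneg := st4_cone_nonneg Vj hVj K hK
  have hfin := st4_finite Vj hVj K hK c hsupp
  constructor
  · -- Part (i)
    set r₁ : ℝ := ∑ i, |(l₀ i : ℝ) - (lstar i : ℝ)| with hr₁def
    have hr₁ : 0 ≤ r₁ := Finset.sum_nonneg fun i _ => abs_nonneg _
    obtain ⟨w, hw⟩ := st4_deep Vj K hK hKint r₁ hr₁
    have hwK : (fun i => (w i : ℝ)) ∈ K := by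
      simpa using hw (fun _ => 0) (fun i => by simpa using hr₁)
    have habs : ∀ i, |(l₀ i : ℝ) - (lstar i : ℝ)| ≤ r₁ := fun i =>
      Finset.single_le_sum (f := fun i' => |(l₀ i' : ℝ) - (lstar i' : ℝ)|)
        (fun _ _ => abs_nonneg _) (Finset.mem_univ i)
    have h2K : (fun i => (w i : ℝ) + ((l₀ i : ℝ) - (lstar i : ℝ))) ∈ K := hw _ habs
    refine ⟨fun l => 𝔔 (l + l₀) - (Q l₀ : ℚ), w, st4_quasiShift 𝔔 h𝔔 l₀ _, ?_⟩
    intro l hlK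
    have hl0 : (0 : Fin k → ℤ) ≤ l := by
      intro i
      have h1 : (0:ℝ) ≤ (l i : ℝ) - (w i : ℝ) := hnonneg _ hlK i
      have h2 : (0:ℝ) ≤ (w i : ℝ) := hnonneg _ hwK i
      have : (0:ℝ) ≤ (l i : ℝ) := by linarith
      exact_mod_cast this
    have hmem : (fun i => ((l + l₀) i : ℝ) - (lstar i : ℝ)) ∈ K := by
      have heq : (fun i => ((l + l₀) i : ℝ) - (lstar i : ℝ))
          = (fun i => (l i : ℝ) - (w i : ℝ))
            + fun i => (w i : ℝ) + ((l₀ i : ℝ) - (lstar i : ℝ)) := by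
        funext i
        simp only [Pi.add_apply]
        push_cast
        ring
      rw [heq]
      exact hadd _ hlK _ h2K
    rw [st4_shift_sum c Q hQ hfin l₀ l hl0]
    push_cast
    rw [hagree (l + l₀) hmem]
  · -- Part (ii)
    intro 𝔔'' lss hQP hagr
    obtain ⟨Λ₁, hΛ₁, hp₁⟩ := hQP
    obtain ⟨Λ₂, hΛ₂, hp₂⟩ := h𝔔
    set Λ : AddSubgroup (Fin k → ℤ) := Λ₁ ⊓ Λ₂ with hΛdef
    have hΛ : Λ.index ≠ 0 := AddSubgroup.index_inf_ne_zero hΛ₁ hΛ₂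
    set r₂ : ℝ := (∑ i, |(lss i : ℝ)|) + ∑ i, |(l₀ i : ℝ) - (lstar i : ℝ)| with hr₂def
    have hs1 : (0:ℝ) ≤ ∑ i, |(lss i : ℝ)| := Finset.sum_nonneg fun i _ => abs_nonneg _
    have hs2 : (0:ℝ) ≤ ∑ i, |(l₀ i : ℝ) - (lstar i : ℝ)| :=
      Finset.sum_nonneg fun i _ => abs_nonneg _
    have hr₂ : 0 ≤ r₂ := by rw [hr₂def]; linarith
    have hlss_le : ∀ i, |(lss i : ℝ)| ≤ r₂ := by
      intro i
      have := Finset.single_le_sum (f := fun i' => |(lss i' : ℝ)|)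
        (fun _ _ => abs_nonneg _) (Finset.mem_univ i)
      rw [hr₂def]; linarith
    have hls_le : ∀ i, |(l₀ i : ℝ) - (lstar i : ℝ)| ≤ r₂ := by
      intro i
      have := Finset.single_le_sum (f := fun i' => |(l₀ i' : ℝ) - (lstar i' : ℝ)|)
        (fun _ _ => abs_nonneg _) (Finset.mem_univ i)
      rw [hr₂def]; linarith
    obtain ⟨w₀, hw₀⟩ := st4_deep Vj K hK hKint r₂ hr₂
    have hw₀K : (fun i => (w₀ i : ℝ)) ∈ K := by
      simpa using hw₀ (fun _ => 0) (fun i => by simpa using hr₂)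
    have hmul : ∀ N : ℕ, 1 ≤ N → ∀ v : Fin k → ℝ, (∀ i, |v i| ≤ r₂) →
        (fun i => ((N • w₀ : Fin k → ℤ) i : ℝ) + v i) ∈ K := by
      intro N hN v hv
      have h1 := hw₀ v hv
      have hN' : (1:ℝ) ≤ (N:ℝ) := by exact_mod_cast hN
      have h2 := st4_cone_smul Vj K hK (r := (N : ℝ) - 1) (by linarith) _ hw₀K
      have h3 := hadd _ h2 _ h1
      have heq : (fun i => ((N • w₀ : Fin k → ℤ) i : ℝ) + v i)
          = ((N : ℝ) - 1) • (fun i => (w₀ i : ℝ)) + fun i => (w₀ i : ℝ) + v i := by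
        funext i
        simp only [Pi.add_apply, Pi.zero_apply, Pi.smul_apply, Pi.mul_apply, Pi.natCast_apply, nsmul_eq_mul, smul_eq_mul, Polynomial.eval_add, Polynomial.eval_mul, Polynomial.eval_C, Polynomial.eval_X]
        push_cast
        ring
      rw [heq]
      exact h3
    set d : ℕ := Λ.index with hddef
    set w : Fin k → ℤ := d • w₀ with hwdef
    have hwΛ : w ∈ Λ := Λ.nsmul_index_mem w₀
    have hd1 : 1 ≤ d := Nat.one_le_iff_ne_zero.mpr hΛ
    have hrepr : ∀ n : ℕ, n • w = (n * d) • w₀ := fun n => by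
      rw [hwdef, smul_smul]
    -- the key evaluation chain
    have E : ∀ n : ℕ, 1 ≤ n → 𝔔'' (n • w) = 𝔔 (n • w + l₀) - (Q l₀ : ℚ) := by
      intro n hn
      have hnd : 1 ≤ n * d := Nat.one_le_iff_ne_zero.mpr (by positivity)
      have hmA : (fun i => ((n • w : Fin k → ℤ) i : ℝ) - (lss i : ℝ)) ∈ K := by
        have := hmul (n * d) hnd (fun i => -(lss i : ℝ))
          (fun i => by rw [abs_neg]; exact hlss_le i)
        rw [hrepr n]
        have heq : (fun i => (((n * d) • w₀ : Fin k → ℤ) i : ℝ) - (lss i : ℝ))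
            = fun i => (((n * d) • w₀ : Fin k → ℤ) i : ℝ) + (fun i' => -(lss i' : ℝ)) i := by
          funext i; ring
        rw [heq]
        exact this
      have hQ''n := hagr (n • w) hmA
      have h0n : (0 : Fin k → ℤ) ≤ n • w := by
        intro i
        have hK0 : (fun i => ((n • w : Fin k → ℤ) i : ℝ)) ∈ K := by
          have hh := hmul (n * d) hnd (fun _ => 0) (fun i => by simpa using hr₂)
          have heq : (fun i => ((n • w : Fin k → ℤ) i : ℝ))
              = fun i => (((n * d) • w₀ : Fin k → ℤ) i : ℝ) + (fun _ : Fin k => (0:ℝ)) i := by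
            funext i
            rw [hrepr n]
            ring
          rw [heq]
          exact hh
        have := hnonneg _ hK0 i
        exact_mod_cast this
      have hsum := st4_shift_sum c Q hQ hfin l₀ (n • w) h0n
      have hmB : (fun i => ((n • w + l₀) i : ℝ) - (lstar i : ℝ)) ∈ K := by
        have := hmul (n * d) hnd (fun i => (l₀ i : ℝ) - (lstar i : ℝ)) hls_le
        have heq : (fun i => ((n • w + l₀) i : ℝ) - (lstar i : ℝ))
            = fun i => (((n * d) • w₀ : Fin k → ℤ) i : ℝ)
              + (fun i' => (l₀ i' : ℝ) - (lstar i' : ℝ)) i := by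
          funext i
          rw [← hrepr n]
          simp only [Pi.add_apply, Pi.zero_apply, Pi.smul_apply, Pi.mul_apply, Pi.natCast_apply, nsmul_eq_mul, smul_eq_mul, Polynomial.eval_add, Polynomial.eval_mul, Polynomial.eval_C, Polynomial.eval_X]
          push_cast
          ring
        rw [heq]
        exact this
      have h𝔔n := hagree (n • w + l₀) hmB
      rw [← hQ''n, hsum]
      push_cast
      rw [h𝔔n]
    obtain ⟨p₁, hp₁⟩ := hp₁ 0
    obtain ⟨p₂, hp₂⟩ := hp₂ l₀
    set P₁ : Polynomial ℚ :=
      MvPolynomial.aeval (fun i => Polynomial.C ((w i : ℚ)) * Polynomial.X) p₁ with hP₁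
    set P₂ : Polynomial ℚ :=
      MvPolynomial.aeval
        (fun i => Polynomial.C ((l₀ i : ℚ)) + Polynomial.C ((w i : ℚ)) * Polynomial.X) p₂
        - Polynomial.C ((Q l₀ : ℚ)) with hP₂
    have hwΛ₁ : w ∈ Λ₁ := hwΛ.1
    have hwΛ₂ : w ∈ Λ₂ := hwΛ.2
    have hev₁ : ∀ n : ℕ, Polynomial.eval ((n : ℚ)) P₁ = 𝔔'' (n • w) := by
      intro n
      have hmem : (n • w : Fin k → ℤ) ∈ Λ₁ := AddSubgroup.nsmul_mem Λ₁ hwΛ₁ n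
      have := hp₁ (n • w) hmem
      rw [hP₁, st4_eval_aeval_poly]
      have heq : (fun i => Polynomial.eval (n : ℚ)
            (Polynomial.C ((w i : ℚ)) * Polynomial.X))
          = fun i => (((0 : Fin k → ℤ) + n • w) i : ℚ) := by
        funext i
        simp only [Pi.add_apply, Pi.zero_apply, Pi.smul_apply, Pi.mul_apply, Pi.natCast_apply, nsmul_eq_mul, smul_eq_mul, Polynomial.eval_add, Polynomial.eval_mul, Polynomial.eval_C, Polynomial.eval_X]
        push_cast
        ring
      rw [heq, ← this, zero_add]
    have hev₂ : ∀ n : ℕ, Polynomial.eval ((n : ℚ)) P₂ = 𝔔 (l₀ + n • w) - (Q l₀ : ℚ) := by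
      intro n
      have hmem : (n • w : Fin k → ℤ) ∈ Λ₂ := AddSubgroup.nsmul_mem Λ₂ hwΛ₂ n
      have := hp₂ (n • w) hmem
      rw [hP₂, Polynomial.eval_sub, Polynomial.eval_C, st4_eval_aeval_poly]
      have heq : (fun i => Polynomial.eval (n : ℚ)
            (Polynomial.C ((l₀ i : ℚ)) + Polynomial.C ((w i : ℚ)) * Polynomial.X))
          = fun i => ((l₀ + n • w) i : ℚ) := by
        funext i
        simp only [Pi.add_apply, Pi.zero_apply, Pi.smul_apply, Pi.mul_apply, Pi.natCast_apply, nsmul_eq_mul, smul_eq_mul, Polynomial.eval_add, Polynomial.eval_mul, Polynomial.eval_C, Polynomial.eval_X]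
        push_cast
        ring
      rw [heq, ← this]
    have hPeq : P₁ = P₂ := by
      apply Polynomial.eq_of_infinite_eval_eq
      refine Set.infinite_of_injective_forall_mem
        (f := fun n : ℕ => ((n + 1 : ℕ) : ℚ)) ?_ ?_
      · intro a b hab
        simp only at hab
        have : (a + 1 : ℕ) = (b + 1 : ℕ) := by exact_mod_cast hab
        omega
      · intro n
        show Polynomial.eval _ P₁ = Polynomial.eval _ P₂
        rw [hev₁ (n + 1), hev₂ (n + 1), E (n + 1) (by omega), add_comm l₀ ((n+1) • w)]
    have hv₁ : Polynomial.eval (0 : ℚ) P₁ = 𝔔'' 0 := by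
      have h := hev₁ 0
      simpa using h
    have hv₂ : Polynomial.eval (0 : ℚ) P₂ = 𝔔 l₀ - (Q l₀ : ℚ) := by
      have h := hev₂ 0
      simpa using h
    have : 𝔔'' 0 = 𝔔 l₀ - (Q l₀ : ℚ) := by rw [← hv₁, ← hv₂, hPeq]
    linarith [this]
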